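/- Let d ≥ 1, N ≥ 1, let v₁, …, v_N ∈ ℝ^d be unit vectors, let q > 1 with conjugate exponent p = q/(q−1), let a_k > 0, c_k > 0, δ_k > 0 for k = 1, …, N, and set b_k = (a_k c_k)^{−1/(q−1)}. Define 𝒢 : ℝ^d → ℝ ∪ {+∞} by 𝒢(σ) = inf { Σ_{k=1}^N c_k ( (a_k/q) ϱ_k^q + δ_k ϱ_k ) : ϱ ∈ ℝ₊^N, Σ_{k=1}^N ϱ_k v_k = σ } (with 𝒢(σ) = +∞ if no such ϱ exists). Then the Legendre transform of 𝒢 is given explicitly by 𝒢*(z) := sup_{σ ∈ ℝ^d} ( z·σ − 𝒢(σ) ) = Σ_{k=1}^N (b_k/p) ( z·v_k − δ_k c_k )₊^p for every z ∈ ℝ^d. -/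

import Mathlib

lemma aux_young (q p A r t : ℝ) (hq : 1 < q) (hp : p = q / (q - 1)) (hA : 0 < A)
    (ht : 0 ≤ t) :
    r * t - A / q * t ^ q ≤ A ^ (-(1 / (q - 1))) / p * (max r 0) ^ p := by
  have hq1 : (0:ℝ) < q - 1 := by linarith
  have hpq : p.HolderConjugate q := by
    have h := (Real.HolderConjugate.conjExponent hq).symm
    rwa [Real.conjExponent, ← hp] at h
  have hp1 : 1 < p := hpq.lt
  have hp0 : p ≠ 0 := by positivity
  rcases le_or_gt r 0 with hr | hr
  · have h3 : max r 0 = 0 := max_eq_right hr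
    rw [h3, Real.zero_rpow hp0, mul_zero]
    have h1 : r * t ≤ 0 := mul_nonpos_of_nonpos_of_nonneg hr ht
    have h2 : 0 ≤ A / q * t ^ q := by
      have := Real.rpow_nonneg ht q
      positivity
    linarith
  · have hrmax : max r 0 = r := max_eq_left hr.le
    have key := Real.young_inequality (r * A ^ (-(1/q))) (A ^ (1/q) * t) hpq
    have hA1 : A ^ (-(1/q)) * A ^ (1/q) = 1 := by
      rw [← Real.rpow_add hA]; norm_num
    have habs1 : |r * A ^ (-(1/q))| = r * A ^ (-(1/q)) := abs_of_nonneg (by positivity)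
    have habs2 : |A ^ (1/q) * t| = A ^ (1/q) * t := abs_of_nonneg (by positivity)
    rw [habs1, habs2] at key
    rw [show (r * A ^ (-(1/q))) * (A ^ (1/q) * t) = r * (A ^ (-(1/q)) * A ^ (1/q)) * t from by
      ring, hA1, mul_one] at key
    have e1 : (r * A ^ (-(1/q))) ^ p = r ^ p * A ^ (-(1 / (q-1))) := by
      rw [Real.mul_rpow hr.le (by positivity), ← Real.rpow_mul hA.le,
        show (-(1/q)) * p = -(1/(q-1)) from by rw [hp]; field_simp]
    have e2 : (A ^ (1/q) * t) ^ q = A * t ^ q := by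
      rw [Real.mul_rpow (by positivity) ht, ← Real.rpow_mul hA.le,
        show (1/q) * q = 1 from by field_simp, Real.rpow_one]
    rw [e1, e2] at key
    rw [hrmax, show A ^ (-(1 / (q-1))) / p * r ^ p = r ^ p * A ^ (-(1/(q-1))) / p from by ring,
      show A / q * t ^ q = A * t ^ q / q from by ring]
    linarith

lemma aux_eq (q p A r t : ℝ) (hq : 1 < q) (hp : p = q / (q - 1)) (hA : 0 < A)
    (ht : t = (max r 0 / A) ^ (1 / (q - 1))) :
    r * t - A / q * t ^ q = A ^ (-(1 / (q - 1))) / p * (max r 0) ^ p := by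
  have hq1 : (0:ℝ) < q - 1 := by linarith
  have hq0 : (0:ℝ) < q := by linarith
  have hp1 : 1 < p := by rw [hp, lt_div_iff₀ hq1]; linarith
  have hp0 : p ≠ 0 := by positivity
  rcases le_or_gt r 0 with hr | hr
  · have h3 : max r 0 = 0 := max_eq_right hr
    rw [h3] at ht ⊢
    rw [zero_div, Real.zero_rpow (by positivity : (1:ℝ)/(q-1) ≠ 0)] at ht
    rw [ht, Real.zero_rpow hp0, Real.zero_rpow (by positivity : q ≠ 0)]
    ring
  · have hrmax : max r 0 = r := max_eq_left hr.le
    rw [hrmax] at ht ⊢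
    set B := A ^ (1/(q-1)) with hB
    have hBpos : 0 < B := Real.rpow_pos_of_pos hA _
    have hAneg : A ^ (-(1/(q-1))) = B⁻¹ := by rw [Real.rpow_neg hA.le]
    have hpsum : p = 1 + 1/(q-1) := by rw [hp]; field_simp; ring
    have hrt : r * t = r ^ p / B := by
      rw [ht, Real.div_rpow hr.le hA.le, ← hB, mul_div_assoc', hpsum,
        Real.rpow_add hr, Real.rpow_one]
    have htq : t ^ q = r ^ p / (A * B) := by
      rw [ht, ← Real.rpow_mul (div_nonneg hr.le hA.le),
        show (1/(q-1)) * q = p from by rw [hp]; ring,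
        Real.div_rpow hr.le hA.le,
        show A ^ p = A * B from by rw [hpsum, Real.rpow_add hA, Real.rpow_one]]
    rw [hrt, htq, hAneg]
    have hrel : p * (q - 1) = q := by rw [hp]; field_simp
    field_simp
    linear_combination hrel

/-- the Legendre transform of the anisotropic congestion cost
`𝒢(σ) = inf { Σ_k c_k ((a_k/q) ϱ_k^q + δ_k ϱ_k) : ϱ ∈ ℝ₊^N, Σ_k ϱ_k v_k = σ }`
(with value `+∞` when no decomposition exists) is
`𝒢*(z) = Σ_k (b_k/p) (z·v_k − δ_k c_k)₊^p`, where `b_k = (a_k c_k)^{−1/(q−1)}`. -/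
theorem stmt_7 {d Nn : ℕ} (hd : 1 ≤ d) (hN : 1 ≤ Nn)
    (v : Fin Nn → EuclideanSpace ℝ (Fin d)) (hv : ∀ k, ‖v k‖ = 1)
    (q p : ℝ) (hq : 1 < q) (hp : p = q / (q - 1))
    (a c δ b : Fin Nn → ℝ)
    (ha : ∀ k, 0 < a k) (hc : ∀ k, 0 < c k) (hδ : ∀ k, 0 < δ k)
    (hb : ∀ k, b k = (a k * c k) ^ (-(1 / (q - 1))))
    (G : EuclideanSpace ℝ (Fin d) → EReal)
    (hG : ∀ σ : EuclideanSpace ℝ (Fin d),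
      G σ = sInf {w : EReal | ∃ ϱ : Fin Nn → ℝ, (∀ k, 0 ≤ ϱ k) ∧
        (∑ k, ϱ k • v k) = σ ∧
        w = ((∑ k, c k * (a k / q * ϱ k ^ q + δ k * ϱ k) : ℝ) : EReal)})
    (z : EuclideanSpace ℝ (Fin d)) :
    sSup {w : EReal | ∃ σ : EuclideanSpace ℝ (Fin d),
        w = (((inner ℝ z σ : ℝ)) : EReal) - G σ} =
      ((∑ k, b k / p * (max ((inner ℝ z (v k) : ℝ) - δ k * c k) 0) ^ p : ℝ) : EReal) := by
  have hq1 : (0:ℝ) < q - 1 := by linarith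
  set s : Fin Nn → ℝ := fun k => (inner ℝ z (v k) : ℝ) with hs
  set R : ℝ := ∑ k, b k / p * (max (s k - δ k * c k) 0) ^ p with hR
  have hinner : ∀ ϱ : Fin Nn → ℝ,
      (inner ℝ z (∑ k, ϱ k • v k) : ℝ) = ∑ k, ϱ k * s k := by
    intro ϱ
    rw [inner_sum]
    exact Finset.sum_congr rfl fun k _ => real_inner_smul_right _ _ _
  apply le_antisymm
  · apply sSup_le
    rintro w ⟨σ, rfl⟩
    rw [hG σ]
    have key : (((inner ℝ z σ : ℝ) - R : ℝ) : EReal) ≤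
        sInf {w : EReal | ∃ ϱ : Fin Nn → ℝ, (∀ k, 0 ≤ ϱ k) ∧
          (∑ k, ϱ k • v k) = σ ∧
          w = ((∑ k, c k * (a k / q * ϱ k ^ q + δ k * ϱ k) : ℝ) : EReal)} := by
      apply le_sInf
      rintro w ⟨ϱ, hϱ0, hϱσ, rfl⟩
      rw [EReal.coe_le_coe_iff, sub_le_iff_le_add]
      have hzσ : (inner ℝ z σ : ℝ) = ∑ k, ϱ k * s k := by rw [← hϱσ]; exact hinner ϱ
      rw [hzσ, hR, ← Finset.sum_add_distrib]
      apply Finset.sum_le_sum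
      intro k _
      have hAk : 0 < a k * c k := mul_pos (ha k) (hc k)
      have hy := aux_young q p (a k * c k) (s k - δ k * c k) (ϱ k) hq hp hAk (hϱ0 k)
      rw [← hb k] at hy
      have hrw : c k * (a k / q * ϱ k ^ q + δ k * ϱ k) =
          (a k * c k) / q * ϱ k ^ q + δ k * c k * ϱ k := by ring
      rw [hrw]
      linarith
    calc ((inner ℝ z σ : ℝ) : EReal) - sInf _
        ≤ ((inner ℝ z σ : ℝ) : EReal) - (((inner ℝ z σ : ℝ) - R : ℝ) : EReal) :=
          EReal.sub_le_sub le_rfl key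
      _ = (R : EReal) := by rw [← EReal.coe_sub]; norm_num
  · set ϱ₀ : Fin Nn → ℝ :=
      fun k => (max (s k - δ k * c k) 0 / (a k * c k)) ^ (1 / (q - 1)) with hϱ₀
    have hϱ₀nn : ∀ k, 0 ≤ ϱ₀ k := fun k =>
      Real.rpow_nonneg (div_nonneg (le_max_right _ _) (mul_pos (ha k) (hc k)).le) _
    refine le_sSup_of_le ⟨∑ k, ϱ₀ k • v k, rfl⟩ ?_
    have hGle : G (∑ k, ϱ₀ k • v k) ≤
        ((∑ k, c k * (a k / q * ϱ₀ k ^ q + δ k * ϱ₀ k) : ℝ) : EReal) := by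
      rw [hG]
      exact sInf_le ⟨ϱ₀, hϱ₀nn, rfl, rfl⟩
    have hreal : (inner ℝ z (∑ k, ϱ₀ k • v k) : ℝ) -
        (∑ k, c k * (a k / q * ϱ₀ k ^ q + δ k * ϱ₀ k)) = R := by
      rw [hinner ϱ₀, ← Finset.sum_sub_distrib, hR]
      apply Finset.sum_congr rfl
      intro k _
      have hAk : 0 < a k * c k := mul_pos (ha k) (hc k)
      have he := aux_eq q p (a k * c k) (s k - δ k * c k) (ϱ₀ k) hq hp hAk rfl
      rw [← hb k] at he
      have hrw : ϱ₀ k * s k - c k * (a k / q * ϱ₀ k ^ q + δ k * ϱ₀ k) =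
          (s k - δ k * c k) * ϱ₀ k - (a k * c k) / q * ϱ₀ k ^ q := by ring
      rw [hrw]
      exact he
    calc (R : EReal)
        = ((inner ℝ z (∑ k, ϱ₀ k • v k) : ℝ) : EReal) -
            ((∑ k, c k * (a k / q * ϱ₀ k ^ q + δ k * ϱ₀ k) : ℝ) : EReal) := by
          rw [← EReal.coe_sub, hreal]
      _ ≤ ((inner ℝ z (∑ k, ϱ₀ k • v k) : ℝ) : EReal) - G (∑ k, ϱ₀ k • v k) :=
          EReal.sub_le_sub le_rfl hGle
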